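/- Let (τ, T, ≤) be a weak stability condition on the abelian category 𝒜 with respect to cl, and suppose 𝒜 is noetherian and τ-artinian. Then every nonzero object X of 𝒜 has a unique nonzero τ-semistable subobject S₁ ⊆ X such that: τ(cl S₁) ≥ τ(cl A) for every nonzero τ-semistable subobject A ⊆ X, and every nonzero τ-semistable subobject A ⊆ X with τ(cl A) = τ(cl S₁) satisfies A ⊆ S₁ (as subobjects of X). -/

import Mathlib

open CategoryTheory CategoryTheory.Limits

namespace JoyceIII

universe u v

variable {𝒜 : Type u} [Category.{v} 𝒜] [Abelian 𝒜]
variable {K : Type*} [AddCommGroup K] {T : Type*} [LinearOrder T]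

/-- `α ∈ C(𝒜)`: `α` is the class of some nonzero object of `𝒜`. -/
def InC (cl : 𝒜 → K) (α : K) : Prop := ∃ X : 𝒜, ¬ IsZero X ∧ cl X = α

/-- `cl` is additive on short exact sequences: `cl Y = cl X + cl Z` for every
short exact sequence `0 → X → Y → Z → 0`. -/
def ClAdditive (cl : 𝒜 → K) : Prop :=
  ∀ S : ShortComplex 𝒜, S.ShortExact → cl S.X₂ = cl S.X₁ + cl S.X₃

/-- `cl X = 0` implies `X ≅ 0`. -/
def ClNondeg (cl : 𝒜 → K) : Prop := ∀ X : 𝒜, cl X = 0 → IsZero X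

/-- `(τ, T, ≤)` is a weak stability condition: the weak seesaw inequality holds. -/
def IsWeakStability (cl : 𝒜 → K) (τ : K → T) : Prop :=
  ∀ α β γ : K, InC cl α → InC cl β → InC cl γ → β = α + γ →
    (τ α ≤ τ β ∧ τ β ≤ τ γ) ∨ (τ γ ≤ τ β ∧ τ β ≤ τ α)

/-- `(τ, T, ≤)` is a stability condition: the seesaw inequality holds. -/
def IsStability (cl : 𝒜 → K) (τ : K → T) : Prop :=
  ∀ α β γ : K, InC cl α → InC cl β → InC cl γ → β = α + γ →
    (τ α < τ β ∧ τ β < τ γ) ∨ (τ γ < τ β ∧ τ β < τ α) ∨ (τ α = τ β ∧ τ β = τ γ)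

/-- The quotient object `X/S` of `X` by a subobject `S`, i.e. the cokernel of
the inclusion `S → X`. -/
noncomputable def quotBySub {X : 𝒜} (S : Subobject X) : 𝒜 := cokernel S.arrow

/-- The quotient `B / A` of subobjects `A ≤ B` of `X` (implemented as the
cokernel of the inclusion `A ⊓ B → B`, which agrees with `B / A` when `A ≤ B`). -/
noncomputable def subQuot {X : 𝒜} (A B : Subobject X) : 𝒜 :=
  cokernel (Subobject.ofLE (A ⊓ B) B inf_le_right)

/-- `X` is `τ`-semistable: `X` is nonzero and every subobject `S ⊆ X` with
`S ≇ 0`, `S ≠ X` satisfies `τ(cl S) ≤ τ(cl (X/S))`. -/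
def Semistable (cl : 𝒜 → K) (τ : K → T) (X : 𝒜) : Prop :=
  ¬ IsZero X ∧ ∀ S : Subobject X, ¬ IsZero ((S : 𝒜)) → S ≠ ⊤ →
    τ (cl ((S : 𝒜))) ≤ τ (cl (quotBySub S))

/-- `X` is `τ`-stable: `X` is nonzero and every subobject `S ⊆ X` with
`S ≇ 0`, `S ≠ X` satisfies `τ(cl S) < τ(cl (X/S))`. -/
def Stable (cl : 𝒜 → K) (τ : K → T) (X : 𝒜) : Prop :=
  ¬ IsZero X ∧ ∀ S : Subobject X, ¬ IsZero ((S : 𝒜)) → S ≠ ⊤ →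
    τ (cl ((S : 𝒜))) < τ (cl (quotBySub S))

/-- `𝒜` is noetherian: all ascending chains of subobjects stabilize. -/
def CatNoetherian (ℬ : Type u) [Category.{v} ℬ] [Abelian ℬ] : Prop :=
  ∀ (X : ℬ) (A : ℕ → Subobject X), (∀ n, A n ≤ A (n + 1)) →
    ∃ N, ∀ n, N ≤ n → A n = A N

/-- `𝒜` is `τ`-artinian: there is no infinite chain of subobjects
`⋯ ⊆ A₂ ⊆ A₁ ⊆ X` with `A (n+1) ≠ A n` and `τ(cl A (n+1)) ≥ τ(cl (A n / A (n+1)))`. -/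
def TauArtinian (cl : 𝒜 → K) (τ : K → T) : Prop :=
  ¬ ∃ (X : 𝒜) (A : ℕ → Subobject X),
      (∀ n, A (n + 1) ≤ A n) ∧ (∀ n, A (n + 1) ≠ A n) ∧
      ∀ n, τ (cl (subQuot (A (n + 1)) (A n))) ≤ τ (cl ((A (n + 1) : 𝒜)))


section Tools

open ZeroObject

variable {cl : 𝒜 → K} {τ : K → T}

lemma cl_of_isZero (hadd : ClAdditive cl) {Y : 𝒜} (h : IsZero Y) : cl Y = 0 := by
  have hS : (ShortComplex.mk (𝟙 Y) (𝟙 Y)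
      (by rw [Category.comp_id]; exact h.eq_of_src _ _)).ShortExact := by
    refine ShortComplex.ShortExact.mk' (ShortComplex.exact_of_isZero_X₂ _ h) ?_ ?_ <;>
      dsimp <;> infer_instance
  have h2 := hadd _ hS
  dsimp at h2
  exact (left_eq_add.mp h2)

lemma cl_iso (hadd : ClAdditive cl) {A B : 𝒜} (e : A ≅ B) : cl A = cl B := by
  have hz : IsZero (0 : 𝒜) := isZero_zero 𝒜
  have hS : (ShortComplex.mk e.hom (0 : B ⟶ (0 : 𝒜)) (comp_zero)).ShortExact := by
    refine ShortComplex.ShortExact.mk' ?_ ?_ ?_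
    · exact (ShortComplex.exact_iff_epi _ rfl).mpr (by dsimp; infer_instance)
    · dsimp; infer_instance
    · exact ⟨fun g h _ => hz.eq_of_src g h⟩
  have h2 := hadd _ hS
  dsimp at h2
  rw [cl_of_isZero hadd hz, add_zero] at h2
  exact h2.symm

lemma cl_add_cokernel (hadd : ClAdditive cl) {A B : 𝒜} (f : A ⟶ B) [Mono f] :
    cl B = cl A + cl (cokernel f) := by
  have hS : (ShortComplex.mk f (cokernel.π f) (cokernel.condition f)).ShortExact := by
    refine ShortComplex.ShortExact.mk' ?_ ?_ ?_
    · exact ShortComplex.exact_of_g_is_cokernel _ (cokernelIsCokernel f)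
    · dsimp; infer_instance
    · dsimp; infer_instance
  exact hadd _ hS

lemma subQuot_eq {Xo : 𝒜} {A B : Subobject Xo} (h : A ≤ B) :
    subQuot A B = cokernel (Subobject.ofLE A B h) := by
  have e : A ⊓ B = A := inf_eq_left.mpr h
  have key : ∀ (P : Subobject Xo) (_ : P = A) (hP : P ≤ B),
      cokernel (Subobject.ofLE P B hP) = cokernel (Subobject.ofLE A B h) := by
    rintro P rfl hP; rfl
  exact key (A ⊓ B) e inf_le_right

lemma cl_add_of_le (hadd : ClAdditive cl) {Xo : 𝒜} {A B : Subobject Xo} (h : A ≤ B) :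
    cl ((B : 𝒜)) = cl ((A : 𝒜)) + cl (subQuot A B) := by
  rw [subQuot_eq h]
  exact cl_add_cokernel hadd (Subobject.ofLE A B h)

lemma not_isZero_of_le {Xo : 𝒜} {A B : Subobject Xo} (h : A ≤ B)
    (hA : ¬ IsZero ((A : 𝒜))) : ¬ IsZero ((B : 𝒜)) := by
  intro hB
  apply hA
  have harr : (Subobject.ofLE A B h) ≫ B.arrow = A.arrow := Subobject.ofLE_arrow h
  have hzero : A.arrow = 0 := by
    rw [← harr, hB.eq_of_src B.arrow 0, comp_zero]
  exact IsZero.of_mono_eq_zero A.arrow hzero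

lemma isZero_bot {Xo : 𝒜} : IsZero (((⊥ : Subobject Xo) : 𝒜)) :=
  IsZero.of_mono_eq_zero _ (Subobject.bot_arrow)

lemma isZero_subQuot_iff (hadd : ClAdditive cl) {Xo : 𝒜} {A B : Subobject Xo} (h : A ≤ B) :
    IsZero (subQuot A B) ↔ A = B := by
  rw [subQuot_eq h]
  constructor
  · intro hz
    have hπ : cokernel.π (Subobject.ofLE A B h) = 0 := hz.eq_of_tgt _ _
    have hepi : Epi (Subobject.ofLE A B h) := Abelian.epi_of_cokernel_π_eq_zero _ hπ
    have : IsIso (Subobject.ofLE A B h) := isIso_of_mono_of_epi _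
    refine le_antisymm h (Subobject.le_of_comm (inv (Subobject.ofLE A B h)) ?_)
    rw [IsIso.inv_comp_eq, Subobject.ofLE_arrow]
  · rintro rfl
    rw [Subobject.ofLE_refl]
    exact IsZero.of_epi_eq_zero (cokernel.π _) (cokernel.π_of_epi _)

lemma seesaw (hwsc : IsWeakStability cl τ) {a b c : 𝒜}
    (ha : ¬ IsZero a) (hb : ¬ IsZero b) (hc : ¬ IsZero c) (h : cl b = cl a + cl c) :
    (τ (cl a) ≤ τ (cl b) ∧ τ (cl b) ≤ τ (cl c)) ∨
    (τ (cl c) ≤ τ (cl b) ∧ τ (cl b) ≤ τ (cl a)) :=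
  hwsc _ _ _ ⟨a, ha, rfl⟩ ⟨b, hb, rfl⟩ ⟨c, hc, rfl⟩ h

end Tools


section MV

variable {cl : 𝒜 → K} {Xo : 𝒜} (P W : Subobject Xo)

/-- The map `P ⊓ W → P ⊞ W` (as a pullback). -/
noncomputable def mvf : pullback P.arrow W.arrow ⟶ (P : 𝒜) ⊞ (W : 𝒜) :=
  biprod.lift (pullback.fst P.arrow W.arrow) (-(pullback.snd P.arrow W.arrow))

/-- The map `P ⊞ W → P ⊔ W`. -/
noncomputable def mvg : (P : 𝒜) ⊞ (W : 𝒜) ⟶ ((P ⊔ W : Subobject Xo) : 𝒜) :=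
  biprod.desc (Subobject.ofLE P (P ⊔ W) le_sup_left) (Subobject.ofLE W (P ⊔ W) le_sup_right)

lemma mvg_arrow : mvg P W ≫ (P ⊔ W).arrow = biprod.desc P.arrow W.arrow := by
  apply biprod.hom_ext' <;>
    simp [mvg, Subobject.ofLE_arrow]

lemma mvfg : mvf P W ≫ mvg P W = 0 := by
  rw [← cancel_mono (P ⊔ W).arrow, Category.assoc, mvg_arrow, zero_comp]
  simp [mvf, pullback.condition]

instance mvf_mono : Mono (mvf P W) :=
  mono_of_mono_fac (biprod.lift_fst _ _)

lemma comp_desc_arrows {Z : 𝒜} (t : Z ⟶ (P : 𝒜) ⊞ (W : 𝒜)) :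
    t ≫ biprod.desc P.arrow W.arrow
      = (t ≫ biprod.fst) ≫ P.arrow + (t ≫ biprod.snd) ≫ W.arrow := by
  conv_lhs => rw [show t = biprod.lift (t ≫ biprod.fst) (t ≫ biprod.snd) from by
    apply biprod.hom_ext <;> simp]
  rw [biprod.lift_desc]

lemma mvg_epi : Epi (mvg P W) := by
  set c := cokernel.π (mvg P W) with hc
  have hPc : Subobject.ofLE P (P ⊔ W) le_sup_left ≫ c = 0 := by
    have h1 : biprod.inl ≫ mvg P W = Subobject.ofLE P (P ⊔ W) le_sup_left := by
      simp [mvg]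
    rw [← h1, Category.assoc, hc, cokernel.condition, comp_zero]
  have hWc : Subobject.ofLE W (P ⊔ W) le_sup_right ≫ c = 0 := by
    have h1 : biprod.inr ≫ mvg P W = Subobject.ofLE W (P ⊔ W) le_sup_right := by
      simp [mvg]
    rw [← h1, Category.assoc, hc, cokernel.condition, comp_zero]
  have hPN : P ≤ Subobject.mk (kernel.ι c ≫ (P ⊔ W).arrow) := by
    refine Subobject.le_mk_of_comm (kernel.lift c (Subobject.ofLE P (P ⊔ W) le_sup_left) hPc) ?_
    rw [← Category.assoc, kernel.lift_ι, Subobject.ofLE_arrow]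
  have hWN : W ≤ Subobject.mk (kernel.ι c ≫ (P ⊔ W).arrow) := by
    refine Subobject.le_mk_of_comm (kernel.lift c (Subobject.ofLE W (P ⊔ W) le_sup_right) hWc) ?_
    rw [← Category.assoc, kernel.lift_ι, Subobject.ofLE_arrow]
  have hJN : P ⊔ W ≤ Subobject.mk (kernel.ι c ≫ (P ⊔ W).arrow) := sup_le hPN hWN
  have hv := Subobject.ofLEMk_comp hJN
  -- hv : ofLEMk _ _ hJN ≫ (kernel.ι c ≫ (P ⊔ W).arrow) = (P ⊔ W).arrow
  have hvι : Subobject.ofLEMk (P ⊔ W) (kernel.ι c ≫ (P ⊔ W).arrow) hJN ≫ kernel.ι c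
      = 𝟙 _ := by
    rw [← cancel_mono (P ⊔ W).arrow, Category.id_comp, Category.assoc]
    exact hv
  have hczero : c = 0 := by
    have h2 : (Subobject.ofLEMk (P ⊔ W) (kernel.ι c ≫ (P ⊔ W).arrow) hJN ≫ kernel.ι c) ≫ c
        = 0 := by
      rw [Category.assoc, kernel.condition, comp_zero]
    rwa [hvι, Category.id_comp] at h2
  exact Abelian.epi_of_cokernel_π_eq_zero _ (hc ▸ hczero)

noncomputable def mvIsKernel : IsLimit (KernelFork.ofι (mvf P W) (mvfg P W)) := by
  refine KernelFork.IsLimit.ofι' _ _ (fun {Z} t ht => ?_)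
  have ht' : (t ≫ biprod.fst) ≫ P.arrow + (t ≫ biprod.snd) ≫ W.arrow = 0 := by
    rw [← comp_desc_arrows, ← mvg_arrow, ← Category.assoc, ht, zero_comp]
  have heq : (t ≫ biprod.fst) ≫ P.arrow = (-(t ≫ biprod.snd)) ≫ W.arrow := by
    rw [Preadditive.neg_comp]
    exact eq_neg_of_add_eq_zero_left ht'
  refine ⟨pullback.lift (t ≫ biprod.fst) (-(t ≫ biprod.snd)) heq, ?_⟩
  apply biprod.hom_ext
  · rw [Category.assoc]
    simp [mvf]
    exact pullback.lift_fst _ _ _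
  · rw [Category.assoc]
    simp [mvf]
    rw [neg_eq_iff_eq_neg]
    exact pullback.lift_snd _ _ _

lemma inf_eq_mk_pullback : P ⊓ W = Subobject.mk (pullback.fst P.arrow W.arrow ≫ P.arrow) := by
  refine le_antisymm ?_ (le_inf ?_ ?_)
  · refine Subobject.le_mk_of_comm
      (pullback.lift (Subobject.ofLE _ P inf_le_left) (Subobject.ofLE _ W inf_le_right)
        (by rw [Subobject.ofLE_arrow, Subobject.ofLE_arrow])) ?_
    rw [← Category.assoc, pullback.lift_fst, Subobject.ofLE_arrow]
  · conv_rhs => rw [← Subobject.mk_arrow P]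
    exact Subobject.mk_le_mk_of_comm (pullback.fst P.arrow W.arrow) rfl
  · conv_rhs => rw [← Subobject.mk_arrow W]
    exact Subobject.mk_le_mk_of_comm (pullback.snd P.arrow W.arrow) pullback.condition.symm

lemma cl_sup_add_inf (hadd : ClAdditive cl) :
    cl (((P ⊔ W) : Subobject Xo) : 𝒜) + cl (((P ⊓ W) : Subobject Xo) : 𝒜)
      = cl ((P : 𝒜)) + cl ((W : 𝒜)) := by
  have hepi : Epi (mvg P W) := mvg_epi P W
  have hSE : (ShortComplex.mk (mvf P W) (mvg P W) (mvfg P W)).ShortExact := by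
    refine ShortComplex.ShortExact.mk' ?_ ?_ ?_
    · exact ShortComplex.exact_of_f_is_kernel _ (mvIsKernel P W)
    · dsimp; infer_instance
    · exact hepi
  have h1 := hadd _ hSE
  dsimp at h1
  -- h1 : cl (P ⊞ W) = cl (pullback ...) + cl (P ⊔ W)
  have h2 := hadd _ (ShortComplex.Splitting.ofHasBinaryBiproduct ((P : 𝒜)) ((W : 𝒜))).shortExact
  dsimp at h2
  have h3 : cl (((P ⊓ W) : Subobject Xo) : 𝒜) = cl (pullback P.arrow W.arrow) := by
    rw [inf_eq_mk_pullback]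
    exact cl_iso hadd (Subobject.underlyingIso _)
  rw [h3, ← h2, h1, add_comm]

end MV

section Lattice

variable {cl : 𝒜 → K} {τ : K → T} {Xo : 𝒜}

/-- Second isomorphism theorem, at the level of classes. -/
lemma cl_subQuot_sup (hadd : ClAdditive cl) (P W : Subobject Xo) :
    cl (subQuot P (P ⊔ W)) = cl (subQuot (P ⊓ W) W) := by
  have h1 := cl_add_of_le (Xo := Xo) hadd (le_sup_left : P ≤ P ⊔ W)
  have h2 := cl_add_of_le (Xo := Xo) hadd (inf_le_right : P ⊓ W ≤ W)
  have h3 := cl_sup_add_inf P W hadd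
  have e1 : cl (subQuot P (P ⊔ W))
      = cl (((P ⊔ W) : Subobject Xo) : 𝒜) - cl ((P : 𝒜)) := by rw [h1]; abel
  have e2 : cl (subQuot (P ⊓ W) W)
      = cl ((W : 𝒜)) - cl (((P ⊓ W) : Subobject Xo) : 𝒜) := by rw [h2]; abel
  rw [e1, e2, sub_eq_sub_iff_add_eq_add, h3]
  abel

/-- Third isomorphism theorem, at the level of classes. -/
lemma cl_subQuot_trans (hadd : ClAdditive cl) {D E J : Subobject Xo}
    (h1 : D ≤ E) (h2 : E ≤ J) :
    cl (subQuot D J) = cl (subQuot D E) + cl (subQuot E J) := by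
  have a1 := cl_add_of_le (Xo := Xo) hadd h1
  have a2 := cl_add_of_le (Xo := Xo) hadd h2
  have a3 := cl_add_of_le (Xo := Xo) hadd (h1.trans h2)
  have key : cl ((D : 𝒜)) + cl (subQuot D J)
      = cl ((D : 𝒜)) + (cl (subQuot D E) + cl (subQuot E J)) := by
    rw [← a3, a2, a1]; abel
  exact add_left_cancel key

lemma cl_quotBySub_mk (hadd : ClAdditive cl) {A B : 𝒜} (f : A ⟶ B) [Mono f] :
    cl (quotBySub (Subobject.mk f)) = cl (cokernel f) := by
  have h : (Subobject.mk f).arrow = (Subobject.underlyingIso f).hom ≫ f :=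
    (Subobject.underlyingIso_hom_comp_eq_mk f).symm
  unfold quotBySub
  calc cl (cokernel (Subobject.mk f).arrow)
      = cl (cokernel ((Subobject.underlyingIso f).hom ≫ f)) := cl_iso hadd (cokernelIsoOfEq h)
    _ = cl (cokernel f) := cl_iso hadd (cokernelEpiComp _ f)

/-- Semistability of the underlying object of a subobject, in terms of the ambient
subobject lattice. -/
lemma semistable_iff_lattice (hadd : ClAdditive cl) (S : Subobject Xo)
    (hS : ¬ IsZero ((S : 𝒜))) :
    Semistable cl τ ((S : 𝒜)) ↔ (∀ D : Subobject Xo, D ≤ S → ¬ IsZero ((D : 𝒜)) → D ≠ S →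
      τ (cl ((D : 𝒜))) ≤ τ (cl (subQuot D S))) := by
  constructor
  · rintro ⟨-, hsem⟩ D hDS hD hne
    have hmk : ¬ IsZero (((Subobject.mk (Subobject.ofLE D S hDS) : Subobject (S : 𝒜))) : 𝒜) :=
      fun h => hD (h.of_iso (Subobject.underlyingIso _).symm)
    have hmkne : (Subobject.mk (Subobject.ofLE D S hDS) : Subobject (S : 𝒜)) ≠ ⊤ := by
      intro h
      have hiso : IsIso (Subobject.ofLE D S hDS) := by
        rw [Subobject.isIso_iff_mk_eq_top]; exact h
      apply hne
      refine le_antisymm hDS (Subobject.le_of_comm (inv (Subobject.ofLE D S hDS)) ?_)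
      rw [IsIso.inv_comp_eq, Subobject.ofLE_arrow]
    have hres := hsem _ hmk hmkne
    rw [cl_quotBySub_mk hadd (Subobject.ofLE D S hDS)] at hres
    rw [subQuot_eq hDS]
    calc τ (cl ((D : 𝒜)))
        = τ (cl (((Subobject.mk (Subobject.ofLE D S hDS) : Subobject (S : 𝒜))) : 𝒜)) := by
          rw [cl_iso hadd (Subobject.underlyingIso _)]
      _ ≤ _ := hres
  · intro hlat
    refine ⟨hS, fun S' hS' hS'top => ?_⟩
    have hDS : Subobject.mk (S'.arrow ≫ S.arrow) ≤ S := by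
      conv_rhs => rw [← Subobject.mk_arrow S]
      exact Subobject.mk_le_mk_of_comm S'.arrow rfl
    have hDnz : ¬ IsZero ((Subobject.mk (S'.arrow ≫ S.arrow) : 𝒜)) :=
      fun h => hS' (h.of_iso (Subobject.underlyingIso _).symm)
    have hDne : Subobject.mk (S'.arrow ≫ S.arrow) ≠ S := by
      intro h
      apply hS'top
      have h2 : Subobject.mk S.arrow ≤ Subobject.mk (S'.arrow ≫ S.arrow) := by
        rw [Subobject.mk_arrow]; exact h.ge
      set v := Subobject.ofMkLEMk S.arrow (S'.arrow ≫ S.arrow) h2 with hvdef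
      have hv : v ≫ S'.arrow ≫ S.arrow = S.arrow := Subobject.ofMkLEMk_comp h2
      have hv1 : v ≫ S'.arrow = 𝟙 _ := by
        rw [← cancel_mono S.arrow, Category.assoc, Category.id_comp, hv]
      have hv2 : S'.arrow ≫ v = 𝟙 _ := by
        rw [← cancel_mono S'.arrow, Category.assoc, hv1, Category.comp_id, Category.id_comp]
      have : IsIso S'.arrow := ⟨v, hv2, hv1⟩
      exact (Subobject.isIso_arrow_iff_eq_top S').mp this
    have hres := hlat _ hDS hDnz hDne
    have harr : Subobject.ofLE _ S hDS
        = (Subobject.underlyingIso (S'.arrow ≫ S.arrow)).hom ≫ S'.arrow := by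
      rw [← cancel_mono S.arrow, Subobject.ofLE_arrow, Category.assoc]
      exact (Subobject.underlyingIso_hom_comp_eq_mk (S'.arrow ≫ S.arrow)).symm
    have hq : cl (subQuot (Subobject.mk (S'.arrow ≫ S.arrow)) S) = cl (quotBySub S') := by
      rw [subQuot_eq hDS]
      calc cl (cokernel (Subobject.ofLE _ S hDS))
          = cl (cokernel ((Subobject.underlyingIso (S'.arrow ≫ S.arrow)).hom ≫ S'.arrow)) :=
            cl_iso hadd (cokernelIsoOfEq harr)
        _ = cl (cokernel S'.arrow) := cl_iso hadd (cokernelEpiComp _ _)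
        _ = cl (quotBySub S') := rfl
    have hcl : cl ((Subobject.mk (S'.arrow ≫ S.arrow) : 𝒜)) = cl ((S' : 𝒜)) :=
      cl_iso hadd (Subobject.underlyingIso _)
    rw [← hcl, ← hq]
    exact hres

end Lattice

section Chains

variable {cl : 𝒜 → K} {τ : K → T} {Xo : 𝒜}

/-- From the noetherian property: every nonempty set of subobjects has a maximal element. -/
lemma exists_maximal (hnoeth : CatNoetherian 𝒜) (Xo : 𝒜) (s : Set (Subobject Xo))
    (hs : s.Nonempty) : ∃ M ∈ s, ∀ B ∈ s, M ≤ B → B = M := by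
  classical
  by_contra hno
  push_neg at hno
  -- hno : ∀ M ∈ s, ∃ B ∈ s, M ≤ B ∧ B ≠ M
  have step : ∀ p : {B : Subobject Xo // B ∈ s}, ∃ q : {B : Subobject Xo // B ∈ s},
      p.1 ≤ q.1 ∧ q.1 ≠ p.1 := by
    rintro ⟨B, hB⟩
    obtain ⟨B', hB', h1, h2⟩ := hno B hB
    exact ⟨⟨B', hB'⟩, h1, h2⟩
  choose F hF1 hF2 using step
  obtain ⟨A0, hA0⟩ := hs
  let A : ℕ → {B : Subobject Xo // B ∈ s} := fun n => Nat.rec ⟨A0, hA0⟩ (fun _ p => F p) n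
  obtain ⟨N, hN⟩ := hnoeth Xo (fun n => (A n).1) (fun n => hF1 (A n))
  exact hF2 (A N) (hN (N + 1) (Nat.le_succ N))

/-- The relation of being a "τ-destabilizing subobject". -/
def DescRel (cl : 𝒜 → K) (τ : K → T) (Xo : 𝒜) : Subobject Xo → Subobject Xo → Prop :=
  fun D C => ¬ IsZero ((D : 𝒜)) ∧ D ≤ C ∧ D ≠ C ∧
    τ (cl (subQuot D C)) ≤ τ (cl ((D : 𝒜)))

/-- From `τ`-artinianity: the destabilizing relation is well-founded. -/
lemma descRel_wf (hart : TauArtinian cl τ) : WellFounded (DescRel cl τ Xo) := by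
  classical
  by_contra hwf
  have hex : ∃ a, ¬ Acc (DescRel cl τ Xo) a := by
    by_contra h
    push_neg at h
    exact hwf ⟨h⟩
  have key : ∀ p : {a : Subobject Xo // ¬ Acc (DescRel cl τ Xo) a},
      ∃ q : {a : Subobject Xo // ¬ Acc (DescRel cl τ Xo) a}, DescRel cl τ Xo q.1 p.1 := by
    rintro ⟨a, ha⟩
    by_contra hb
    push_neg at hb
    refine ha (Acc.intro a (fun b hba => ?_))
    by_contra hbacc
    exact hb ⟨b, hbacc⟩ hba
  choose F hF using key
  obtain ⟨a0, ha0⟩ := hex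
  let A : ℕ → {a : Subobject Xo // ¬ Acc (DescRel cl τ Xo) a} :=
    fun n => Nat.rec ⟨a0, ha0⟩ (fun _ p => F p) n
  apply hart
  exact ⟨Xo, fun n => (A n).1, fun n => (hF (A n)).2.1, fun n => (hF (A n)).2.2.1,
    fun n => (hF (A n)).2.2.2⟩

/-- Lattice-level semistability. -/
def LSem (cl : 𝒜 → K) (τ : K → T) {Xo : 𝒜} (S : Subobject Xo) : Prop :=
  ¬ IsZero ((S : 𝒜)) ∧ ∀ D : Subobject Xo, D ≤ S → ¬ IsZero ((D : 𝒜)) → D ≠ S →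
    τ (cl ((D : 𝒜))) ≤ τ (cl (subQuot D S))

/-- Subobjects of semistables have smaller `τ`. -/
lemma LSem.tau_sub_le (hadd : ClAdditive cl) (hwsc : IsWeakStability cl τ)
    {S : Subobject Xo} (hss : LSem cl τ S) {D : Subobject Xo} (hD : D ≤ S)
    (hDnz : ¬ IsZero ((D : 𝒜))) : τ (cl ((D : 𝒜))) ≤ τ (cl ((S : 𝒜))) := by
  by_cases hne : D = S
  · rw [hne]
  · have h1 := hss.2 D hD hDnz hne
    have hqnz : ¬ IsZero (subQuot D S) := fun h => hne ((isZero_subQuot_iff hadd hD).mp h)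
    rcases seesaw hwsc hDnz hss.1 hqnz (cl_add_of_le hadd hD) with ⟨h2, _⟩ | ⟨h2, h3⟩
    · exact h2
    · exact h1.trans h2

/-- Quotients of semistables have larger `τ`. -/
lemma LSem.tau_quot_ge (hadd : ClAdditive cl) (hwsc : IsWeakStability cl τ)
    {S : Subobject Xo} (hss : LSem cl τ S) {D : Subobject Xo} (hD : D ≤ S) (hne : D ≠ S) :
    τ (cl ((S : 𝒜))) ≤ τ (cl (subQuot D S)) := by
  have hqnz : ¬ IsZero (subQuot D S) := fun h => hne ((isZero_subQuot_iff hadd hD).mp h)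
  by_cases hDz : IsZero ((D : 𝒜))
  · have hq : cl (subQuot D S) = cl ((S : 𝒜)) := by
      have h0 := cl_add_of_le hadd hD
      rw [cl_of_isZero hadd hDz, zero_add] at h0
      exact h0.symm
    rw [hq]
  · have h1 := hss.2 D hD hDz hne
    rcases seesaw hwsc hDz hss.1 hqnz (cl_add_of_le hadd hD) with ⟨_, h2⟩ | ⟨h2, h3⟩
    · exact h2
    · exact h3.trans h1

/-- Step 1: every nonzero subobject contains a semistable subobject with larger `τ`. -/
lemma exists_lsem_le (hadd : ClAdditive cl) (hwsc : IsWeakStability cl τ)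
    (hart : TauArtinian cl τ) (C : Subobject Xo) (hC : ¬ IsZero ((C : 𝒜))) :
    ∃ S : Subobject Xo, S ≤ C ∧ LSem cl τ S ∧ τ (cl ((C : 𝒜))) ≤ τ (cl ((S : 𝒜))) := by
  classical
  by_contra hno
  have step : ∀ p : {S : Subobject Xo //
        S ≤ C ∧ ¬ IsZero ((S : 𝒜)) ∧ τ (cl ((C : 𝒜))) ≤ τ (cl ((S : 𝒜)))},
      ∃ q : {S : Subobject Xo //
        S ≤ C ∧ ¬ IsZero ((S : 𝒜)) ∧ τ (cl ((C : 𝒜))) ≤ τ (cl ((S : 𝒜)))},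
        q.1 ≤ p.1 ∧ q.1 ≠ p.1 ∧ τ (cl (subQuot q.1 p.1)) ≤ τ (cl ((q.1 : 𝒜))) := by
    rintro ⟨S, hSC, hSnz, hSτ⟩
    have hnss : ¬ (∀ D : Subobject Xo, D ≤ S → ¬ IsZero ((D : 𝒜)) → D ≠ S →
        τ (cl ((D : 𝒜))) ≤ τ (cl (subQuot D S))) := by
      intro hss
      exact hno ⟨S, hSC, ⟨hSnz, hss⟩, hSτ⟩
    push_neg at hnss
    obtain ⟨D, hDS, hDnz, hDne, hgt⟩ := hnss
    have hqnz : ¬ IsZero (subQuot D S) := fun h => hDne ((isZero_subQuot_iff hadd hDS).mp h)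
    rcases seesaw hwsc hDnz hSnz hqnz (cl_add_of_le hadd hDS) with ⟨h1, h2⟩ | ⟨h1, h2⟩
    · exact absurd (h1.trans h2) (not_le.mpr hgt)
    · exact ⟨⟨D, hDS.trans hSC, hDnz, hSτ.trans h2⟩, hDS, hDne, h1.trans h2⟩
  choose F hF1 hF2 hF3 using step
  let A : ℕ → {S : Subobject Xo //
      S ≤ C ∧ ¬ IsZero ((S : 𝒜)) ∧ τ (cl ((C : 𝒜))) ≤ τ (cl ((S : 𝒜)))} :=
    fun n => Nat.rec ⟨C, le_rfl, hC, le_rfl⟩ (fun _ p => F p) n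
  apply hart
  exact ⟨Xo, fun n => (A n).1, fun n => hF1 (A n), fun n => hF2 (A n), fun n => hF3 (A n)⟩

end Chains

section GA

variable {cl : 𝒜 → K} {τ : K → T} {Xo : 𝒜}

/-- `GoodAbove t W`: every nonzero quotient of `W` has `τ`-value at least `t`. -/
def GoodAbove (cl : 𝒜 → K) (τ : K → T) (t : T) {Xo : 𝒜} (W : Subobject Xo) : Prop :=
  ∀ D : Subobject Xo, D ≤ W → D ≠ W → t ≤ τ (cl (subQuot D W))

lemma GoodAbove.tau_ge (hadd : ClAdditive cl) {t : T} {W : Subobject Xo}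
    (hW : ¬ IsZero ((W : 𝒜))) (hGA : GoodAbove cl τ t W) : t ≤ τ (cl ((W : 𝒜))) := by
  have hbot : (⊥ : Subobject Xo) ≠ W := by
    intro h
    exact hW (h ▸ isZero_bot)
  have h1 := hGA ⊥ bot_le hbot
  have h2 : cl (subQuot (⊥ : Subobject Xo) W) = cl ((W : 𝒜)) := by
    have h0 := cl_add_of_le hadd (bot_le : (⊥ : Subobject Xo) ≤ W)
    rw [cl_of_isZero hadd isZero_bot, zero_add] at h0
    exact h0.symm
  rwa [h2] at h1

lemma LSem.goodAbove (hadd : ClAdditive cl) (hwsc : IsWeakStability cl τ)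
    {S : Subobject Xo} (hss : LSem cl τ S) {t : T} (ht : t ≤ τ (cl ((S : 𝒜)))) :
    GoodAbove cl τ t S := fun D hD hne =>
  ht.trans (hss.tau_quot_ge hadd hwsc hD hne)

lemma GoodAbove.sup (hadd : ClAdditive cl) (hwsc : IsWeakStability cl τ)
    {t : T} {U V : Subobject Xo} (hGU : GoodAbove cl τ t U) (hGV : GoodAbove cl τ t V) :
    GoodAbove cl τ t (U ⊔ V) := by
  intro D hD hne
  have hDE : D ≤ D ⊔ U := le_sup_left
  have hEJ : D ⊔ U ≤ U ⊔ V := sup_le (hD) (le_sup_left)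
  have hEV : (D ⊔ U) ⊔ V = U ⊔ V := by
    rw [sup_assoc, sup_eq_right.mpr hD]
  have hq2 : cl (subQuot (D ⊔ U) (U ⊔ V)) = cl (subQuot ((D ⊔ U) ⊓ V) V) := by
    have h := cl_subQuot_sup hadd (D ⊔ U) V
    rwa [hEV] at h
  have hq1 : cl (subQuot D (D ⊔ U)) = cl (subQuot (D ⊓ U) U) := cl_subQuot_sup hadd D U
  have ht1' : D ⊓ U ≠ U → t ≤ τ (cl (subQuot D (D ⊔ U))) := by
    intro hne'
    rw [hq1]
    exact hGU _ inf_le_right hne'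
  have ht2' : (D ⊔ U) ⊓ V ≠ V → t ≤ τ (cl (subQuot (D ⊔ U) (U ⊔ V))) := by
    intro hne'
    rw [hq2]
    exact hGV _ inf_le_right hne'
  by_cases hDE' : D = D ⊔ U
  · -- U ≤ D
    have hEne : (D ⊔ U) ⊓ V ≠ V := by
      intro h
      apply hne
      rw [hDE', ← hEV, sup_eq_left.mpr (inf_eq_right.mp h)]
    have h3 := ht2' hEne
    rw [← hDE'] at h3
    exact h3
  · have hinfU : D ⊓ U ≠ U := by
      intro h
      exact hDE' (sup_eq_left.mpr (inf_eq_right.mp h)).symm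
    by_cases hEJ' : D ⊔ U = U ⊔ V
    · have h4 := ht1' hinfU
      rw [← hEJ'] at hne ⊢
      exact h4
    · have hVne : (D ⊔ U) ⊓ V ≠ V := by
        intro h
        apply hEJ'
        rw [← hEV, sup_eq_left.mpr (inf_eq_right.mp h)]
      have hTI := cl_subQuot_trans hadd hDE hEJ
      have hnz1 : ¬ IsZero (subQuot D (D ⊔ U)) :=
        fun h => hDE' ((isZero_subQuot_iff hadd hDE).mp h)
      have hnz2 : ¬ IsZero (subQuot (D ⊔ U) (U ⊔ V)) :=
        fun h => hEJ' ((isZero_subQuot_iff hadd hEJ).mp h)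
      have hnz0 : ¬ IsZero (subQuot D (U ⊔ V)) :=
        fun h => hne ((isZero_subQuot_iff hadd (hDE.trans hEJ)).mp h)
      rcases seesaw hwsc hnz1 hnz0 hnz2 hTI with ⟨h1, _⟩ | ⟨h1, _⟩
      · exact (ht1' hinfU).trans h1
      · exact (ht2' hVne).trans h1

end GA

section Main

variable {cl : 𝒜 → K} {τ : K → T} {Xo : 𝒜}

/-- Claim A: every nonzero subobject contains a semistable subobject whose `τ`-value is
maximal among those of all its semistable subobjects. -/
lemma exists_max_tau (hadd : ClAdditive cl) (hwsc : IsWeakStability cl τ)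
    (hnoeth : CatNoetherian 𝒜) (hart : TauArtinian cl τ) (C : Subobject Xo)
    (hC : ¬ IsZero ((C : 𝒜))) :
    ∃ S : Subobject Xo, S ≤ C ∧ LSem cl τ S ∧
      ∀ S' : Subobject Xo, S' ≤ C → LSem cl τ S' →
        τ (cl ((S' : 𝒜))) ≤ τ (cl ((S : 𝒜))) := by
  classical
  induction C using WellFounded.induction (descRel_wf (Xo := Xo) hart) with
  | _ C IH => ?_
  by_cases hss : LSem cl τ C
  case pos =>
    exact ⟨C, le_rfl, hss, fun S' hS' hS'ss => hss.tau_sub_le hadd hwsc hS' hS'ss.1⟩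
  case neg => ?_
  have hnss : ¬ (∀ D : Subobject Xo, D ≤ C → ¬ IsZero ((D : 𝒜)) → D ≠ C →
      τ (cl ((D : 𝒜))) ≤ τ (cl (subQuot D C))) := fun h => hss ⟨hC, h⟩
  push_neg at hnss
  obtain ⟨D0, hD0C, hD0nz, hD0ne, hD0gt⟩ := hnss
  have hq0nz : ¬ IsZero (subQuot D0 C) := fun h => hD0ne ((isZero_subQuot_iff hadd hD0C).mp h)
  have hD0mem : τ (cl (subQuot D0 C)) ≤ τ (cl ((D0 : 𝒜))) := by
    rcases seesaw hwsc hD0nz hC hq0nz (cl_add_of_le hadd hD0C) with ⟨h1, h2⟩ | ⟨h1, h2⟩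
    · exact absurd (h1.trans h2) (not_le.mpr hD0gt)
    · exact h1.trans h2
  obtain ⟨Dm, hDmmem, hDmmax⟩ := exists_maximal hnoeth Xo
    {D | D ≤ C ∧ D ≠ C ∧ ¬ IsZero ((D : 𝒜)) ∧ τ (cl (subQuot D C)) ≤ τ (cl ((D : 𝒜)))}
    ⟨D0, hD0C, hD0ne, hD0nz, hD0mem⟩
  obtain ⟨hDmC, hDmne, hDmnz, hDmτ⟩ := hDmmem
  obtain ⟨SD, hSDle, hSDss, hSDmax⟩ := IH Dm ⟨hDmnz, hDmC, hDmne, hDmτ⟩ hDmnz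
  have htD : τ (cl ((Dm : 𝒜))) ≤ τ (cl ((SD : 𝒜))) := by
    obtain ⟨S2, hS2le, hS2ss, hS2τ⟩ := exists_lsem_le hadd hwsc hart Dm hDmnz
    exact hS2τ.trans (hSDmax S2 hS2le hS2ss)
  refine ⟨SD, hSDle.trans hDmC, hSDss, ?_⟩
  intro S' hS'C hS'ss
  by_cases hS'D : S' ≤ Dm
  · exact (hSDmax S' hS'D hS'ss)
  · have hDE : Dm ≤ Dm ⊔ S' := le_sup_left
    have hDEne : Dm ≠ Dm ⊔ S' := fun h => hS'D (le_sup_right.trans h.ge)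
    have hEC : Dm ⊔ S' ≤ C := sup_le hDmC hS'C
    have hq1 : cl (subQuot Dm (Dm ⊔ S')) = cl (subQuot (Dm ⊓ S') S') :=
      cl_subQuot_sup hadd Dm S'
    have hinfne : Dm ⊓ S' ≠ S' := fun h => hS'D (inf_eq_right.mp h)
    have hS'q : τ (cl ((S' : 𝒜))) ≤ τ (cl (subQuot Dm (Dm ⊔ S'))) := by
      rw [hq1]
      exact hS'ss.tau_quot_ge hadd hwsc inf_le_right hinfne
    by_cases hECeq : Dm ⊔ S' = C
    · rw [hECeq] at hS'q
      exact (hS'q.trans hDmτ).trans htD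
    · have hEgt : ¬ (τ (cl (subQuot (Dm ⊔ S') C)) ≤ τ (cl (((Dm ⊔ S') : Subobject Xo) : 𝒜))) := by
        intro hle
        exact hDEne (hDmmax _ ⟨hEC, hECeq, not_isZero_of_le le_sup_left hDmnz, hle⟩
          le_sup_left).symm
      have hTI := cl_subQuot_trans hadd hDE hEC
      have hnz1 : ¬ IsZero (subQuot Dm (Dm ⊔ S')) :=
        fun h => hDEne ((isZero_subQuot_iff hadd hDE).mp h)
      have hnz2 : ¬ IsZero (subQuot (Dm ⊔ S') C) :=
        fun h => hECeq ((isZero_subQuot_iff hadd hEC).mp h)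
      have hnz0 : ¬ IsZero (subQuot Dm C) :=
        fun h => hDmne ((isZero_subQuot_iff hadd hDmC).mp h)
      rcases seesaw hwsc hnz1 hnz0 hnz2 hTI with ⟨h1, _⟩ | ⟨h1, h2⟩
      · exact ((hS'q.trans h1).trans hDmτ).trans htD
      · have hEnz : ¬ IsZero (((Dm ⊔ S') : Subobject Xo) : 𝒜) :=
          not_isZero_of_le le_sup_left hDmnz
        rcases seesaw hwsc hDmnz hEnz hnz1 (cl_add_of_le hadd hDE) with ⟨ha1, _⟩ | ⟨hb1, hb2⟩
        · exact absurd ((h1.trans hDmτ).trans ha1) hEgt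
        · exact (((hS'q.trans hb1).trans hb2).trans htD)

end Main

/-- **Step 6 of the proof of Theorem 4.4.** If `𝒜` is noetherian and
`τ`-artinian, every nonzero `X` has a unique nonzero `τ`-semistable subobject
`S₁ ⊆ X` such that `τ(cl S₁)` is maximal among the `τ`-values of nonzero
`τ`-semistable subobjects of `X`, and every nonzero `τ`-semistable subobject
`A ⊆ X` with `τ(cl A) = τ(cl S₁)` satisfies `A ⊆ S₁`. -/
theorem existsUnique_maximal_semistable_subobject (cl : 𝒜 → K) (τ : K → T)
    (hadd : ClAdditive cl) (hnd : ClNondeg cl)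
    (hwsc : IsWeakStability cl τ)
    (hnoeth : CatNoetherian 𝒜) (hart : TauArtinian cl τ)
    (X : 𝒜) (hX : ¬ IsZero X) :
    ∃! S₁ : Subobject X,
      ¬ IsZero ((S₁ : 𝒜)) ∧ Semistable cl τ ((S₁ : 𝒜)) ∧
      (∀ A : Subobject X, ¬ IsZero ((A : 𝒜)) → Semistable cl τ ((A : 𝒜)) →
        τ (cl ((A : 𝒜))) ≤ τ (cl ((S₁ : 𝒜)))) ∧
      (∀ A : Subobject X, ¬ IsZero ((A : 𝒜)) → Semistable cl τ ((A : 𝒜)) →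
        τ (cl ((A : 𝒜))) = τ (cl ((S₁ : 𝒜))) → A ≤ S₁) := by
  classical
  have htopnz : ¬ IsZero (((⊤ : Subobject X) : 𝒜)) :=
    fun h => hX (h.of_iso (asIso (⊤ : Subobject X).arrow).symm)
  obtain ⟨Sm, -, hSmss, hSmmax⟩ := exists_max_tau hadd hwsc hnoeth hart (⊤ : Subobject X) htopnz
  set t := τ (cl ((Sm : 𝒜))) with ht
  obtain ⟨U, hUmem, hUmax⟩ := exists_maximal hnoeth X
    {W | ¬ IsZero ((W : 𝒜)) ∧ GoodAbove cl τ t W}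
    ⟨Sm, hSmss.1, hSmss.goodAbove hadd hwsc le_rfl⟩
  obtain ⟨hUnz, hUGA⟩ := hUmem
  have hUgreat : ∀ V : Subobject X, ¬ IsZero ((V : 𝒜)) → GoodAbove cl τ t V → V ≤ U := by
    intro V hVnz hVGA
    have hmem : (U ⊔ V) ∈ {W : Subobject X | ¬ IsZero ((W : 𝒜)) ∧ GoodAbove cl τ t W} :=
      ⟨not_isZero_of_le le_sup_left hUnz, hUGA.sup hadd hwsc hVGA⟩
    exact le_sup_right.trans (hUmax _ hmem le_sup_left).le
  have hUget : t ≤ τ (cl ((U : 𝒜))) := hUGA.tau_ge hadd hUnz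
  have hbound : ∀ S' : Subobject X, LSem cl τ S' → τ (cl ((S' : 𝒜))) ≤ t :=
    fun S' h => hSmmax S' le_top h
  have hUt : τ (cl ((U : 𝒜))) = t := by
    obtain ⟨S2, hS2le, hS2ss, hS2τ⟩ := exists_lsem_le hadd hwsc hart U hUnz
    exact le_antisymm (hS2τ.trans (hbound S2 hS2ss)) hUget
  have hUss : LSem cl τ U := by
    refine ⟨hUnz, fun D hD hDnz hDne => ?_⟩
    have h1 : τ (cl ((D : 𝒜))) ≤ t := by
      obtain ⟨S3, hS3le, hS3ss, hS3τ⟩ := exists_lsem_le hadd hwsc hart D hDnz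
      exact hS3τ.trans (hbound S3 hS3ss)
    exact h1.trans (hUGA D hD hDne)
  have hUsem : Semistable cl τ ((U : 𝒜)) :=
    (semistable_iff_lattice hadd U hUnz).mpr hUss.2
  have hAls : ∀ A : Subobject X, ¬ IsZero ((A : 𝒜)) → Semistable cl τ ((A : 𝒜)) →
      LSem cl τ A :=
    fun A hA hsem => ⟨hA, (semistable_iff_lattice hadd A hA).mp hsem⟩
  refine ⟨U, ⟨hUnz, hUsem, ?_, ?_⟩, ?_⟩
  · intro A hA hsem
    rw [hUt]
    exact hbound A (hAls A hA hsem)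
  · intro A hA hsem hτ
    refine hUgreat A hA ((hAls A hA hsem).goodAbove hadd hwsc ?_)
    rw [hτ, hUt]
  · rintro B ⟨hBnz, hBsem, hBmax, hBgreat⟩
    have h1 : τ (cl ((B : 𝒜))) = τ (cl ((U : 𝒜))) := by
      refine le_antisymm ?_ (hBmax U hUnz hUsem)
      rw [hUt]
      exact hbound B (hAls B hBnz hBsem)
    refine le_antisymm ?_ (hBgreat U hUnz hUsem h1.symm)
    exact hUgreat B hBnz ((hAls B hBnz hBsem).goodAbove hadd hwsc (by rw [h1, hUt]))


end JoyceIII
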